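/- If G is a finite connected simple graph and H is a connected subgraph of G (obtained by deleting edges and vertices from G), then scw(H) ≤ scw(G). -/
import Mathlib


open SimpleGraph

universe u

variable {V : Type u}

/-- A tree-cut decomposition of a finite simple graph `G`: a finite tree `T`
on a node type `B`, together with pairwise disjoint (possibly empty) bags
`bag b ⊆ V` whose union is all of `V`. -/
structure TreeCutDecomp [Finite V] (G : SimpleGraph V) where
  B : Type
  finB : Finite B
  T : SimpleGraph B
  isTree : T.IsTree
  bag : B → Set V
  disj : Pairwise fun b d => Disjoint (bag b) (bag d)
  covers : ∀ v : V, ∃ b, v ∈ bag b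

namespace TreeCutDecomp

variable [Finite V] {G : SimpleGraph V}

/-- The adhesion of a link `l` of `T`: the set of edges of `G` whose endpoints lie in
bags indexed by nodes in different components of `T - l` (equivalently, nodes such that
every walk between them uses `l`). -/
def linkAdh (D : TreeCutDecomp G) (l : Sym2 D.B) : Set (Sym2 V) :=
  {e | e ∈ G.edgeSet ∧ ∃ v w : V, ∃ b d : D.B, e = s(v, w) ∧ v ∈ D.bag b ∧ w ∈ D.bag d ∧
    ∀ p : D.T.Walk b d, l ∈ p.edges}

/-- The adhesion of a node `n` of `T`: the set of edges of `G` whose endpoints lie in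
bags indexed by nodes in different components of `T - n` (equivalently, nodes distinct
from `n` such that every walk between them passes through `n`). -/
def nodeAdh (D : TreeCutDecomp G) (n : D.B) : Set (Sym2 V) :=
  {e | e ∈ G.edgeSet ∧ ∃ v w : V, ∃ b d : D.B, e = s(v, w) ∧ v ∈ D.bag b ∧ w ∈ D.bag d ∧
    b ≠ n ∧ d ≠ n ∧ ∀ p : D.T.Walk b d, n ∈ p.support}

/-- The width of a tree-cut decomposition: the maximum of `|adh(l)|` over links `l` of `T`
and of `|X_b| + |adh(b)|` over nodes `b` of `T`. -/
noncomputable def width (D : TreeCutDecomp G) : ℕ :=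
  sSup ({n | ∃ l ∈ D.T.edgeSet, n = (D.linkAdh l).ncard} ∪
        {n | ∃ b : D.B, n = (D.bag b).ncard + (D.nodeAdh b).ncard})

end TreeCutDecomp

/-- The screewidth of `G`: the minimum width of a tree-cut decomposition of `G`. -/
noncomputable def screewidth [Finite V] (G : SimpleGraph V) : ℕ :=
  sInf {n | ∃ D : TreeCutDecomp G, D.width = n}

section Aux

variable [Finite V] {G : SimpleGraph V}

/-- Restrict a tree-cut decomposition of `G` to a subgraph `H` on `S ⊆ V`. -/
noncomputable def TreeCutDecomp.restrict (D : TreeCutDecomp G) (S : Set V)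
    (H : SimpleGraph S) : TreeCutDecomp H where
  B := D.B
  finB := D.finB
  T := D.T
  isTree := D.isTree
  bag b := Subtype.val ⁻¹' (D.bag b)
  disj := fun _ _ hbd => (D.disj hbd).preimage _
  covers v := D.covers v.val

theorem TreeCutDecomp.restrict_linkAdh_subset (D : TreeCutDecomp G) (S : Set V)
    (H : SimpleGraph S) (hsub : ∀ u v : S, H.Adj u v → G.Adj u v) (l : Sym2 D.B) :
    Sym2.map Subtype.val '' ((D.restrict S H).linkAdh l) ⊆ D.linkAdh l := by
  rintro e ⟨e', ⟨heH, v, w, b, d, rfl, hv, hw, hwalk⟩, rfl⟩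
  refine ⟨?_, v.val, w.val, b, d, rfl, hv, hw, hwalk⟩
  exact (SimpleGraph.mem_edgeSet G).2 (hsub v w ((SimpleGraph.mem_edgeSet H).1 heH))

theorem TreeCutDecomp.restrict_nodeAdh_subset (D : TreeCutDecomp G) (S : Set V)
    (H : SimpleGraph S) (hsub : ∀ u v : S, H.Adj u v → G.Adj u v) (n : D.B) :
    Sym2.map Subtype.val '' ((D.restrict S H).nodeAdh n) ⊆ D.nodeAdh n := by
  rintro e ⟨e', ⟨heH, v, w, b, d, rfl, hv, hw, hb, hd, hwalk⟩, rfl⟩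
  refine ⟨?_, v.val, w.val, b, d, rfl, hv, hw, hb, hd, hwalk⟩
  exact (SimpleGraph.mem_edgeSet G).2 (hsub v w ((SimpleGraph.mem_edgeSet H).1 heH))

theorem TreeCutDecomp.restrict_width_le (D : TreeCutDecomp G) (S : Set V)
    (H : SimpleGraph S) (hsub : ∀ u v : S, H.Adj u v → G.Adj u v) :
    (D.restrict S H).width ≤ D.width := by
  have hinj : Function.Injective (Sym2.map (Subtype.val : S → V)) :=
    Sym2.map.injective Subtype.val_injective
  have hlink : ∀ l : Sym2 D.B, ((D.restrict S H).linkAdh l).ncard ≤ (D.linkAdh l).ncard := by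
    intro l
    rw [← Set.ncard_image_of_injective _ hinj]
    exact Set.ncard_le_ncard (D.restrict_linkAdh_subset S H hsub l) (Set.toFinite _)
  have hnode : ∀ n : D.B, ((D.restrict S H).nodeAdh n).ncard ≤ (D.nodeAdh n).ncard := by
    intro n
    rw [← Set.ncard_image_of_injective _ hinj]
    exact Set.ncard_le_ncard (D.restrict_nodeAdh_subset S H hsub n) (Set.toFinite _)
  have hbag : ∀ b : D.B, ((D.restrict S H).bag b).ncard ≤ (D.bag b).ncard := by
    intro b
    rw [← Set.ncard_image_of_injective _ (Subtype.val_injective (p := (· ∈ S)))]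
    exact Set.ncard_le_ncard (Set.image_preimage_subset _ _) (Set.toFinite _)
  have hbdd : BddAbove ({n | ∃ l ∈ D.T.edgeSet, n = (D.linkAdh l).ncard} ∪
        {n | ∃ b : D.B, n = (D.bag b).ncard + (D.nodeAdh b).ncard}) := by
    refine ⟨Nat.card V + Nat.card (Sym2 V), ?_⟩
    have hV : ∀ s : Set V, s.ncard ≤ Nat.card V := fun s => by
      simpa [Set.ncard_univ] using Set.ncard_le_ncard (Set.subset_univ s) Set.finite_univ
    have hS : ∀ s : Set (Sym2 V), s.ncard ≤ Nat.card (Sym2 V) := fun s => by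
      simpa [Set.ncard_univ] using Set.ncard_le_ncard (Set.subset_univ s) Set.finite_univ
    rintro n (⟨l, _, rfl⟩ | ⟨b, rfl⟩)
    · exact (hS _).trans (Nat.le_add_left _ _)
    · exact add_le_add (hV _) (hS _)
  apply csSup_le'
  rintro n (⟨l, hl, rfl⟩ | ⟨b, rfl⟩)
  · exact le_trans (hlink l) (le_csSup hbdd (Or.inl ⟨l, hl, rfl⟩))
  · exact le_trans (add_le_add (hbag b) (hnode b)) (le_csSup hbdd (Or.inr ⟨b, rfl⟩))

/-- The trivial one-bag decomposition. -/
noncomputable def TreeCutDecomp.trivialDecomp (G : SimpleGraph V) : TreeCutDecomp G where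
  B := PUnit
  finB := inferInstance
  T := ⊥
  isTree := ⟨SimpleGraph.Connected.mk (fun a b => by rw [Subsingleton.elim a b]), SimpleGraph.isAcyclic_bot⟩
  bag := fun _ => Set.univ
  disj := fun a b hab => absurd (Subsingleton.elim a b) hab
  covers := fun v => ⟨PUnit.unit, trivial⟩

end Aux

/-- If `G` is a finite connected simple graph and `H` is a connected subgraph of `G`
(a graph on a subset `S` of the vertices of `G` all of whose edges are edges of `G`),
then `scw(H) ≤ scw(G)`. -/
theorem screewidth_subgraph_le [Finite V] (G : SimpleGraph V) (hG : G.Connected)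
    (S : Set V) (H : SimpleGraph S) (hsub : ∀ u v : S, H.Adj u v → G.Adj u v)
    (hH : H.Connected) :
    screewidth H ≤ screewidth G := by
  have hne : {n | ∃ D : TreeCutDecomp G, D.width = n}.Nonempty := by
    refine ⟨_, ⟨TreeCutDecomp.trivialDecomp G, rfl⟩⟩
  obtain ⟨D, hD⟩ := Nat.sInf_mem hne
  calc screewidth H ≤ (D.restrict S H).width := Nat.sInf_le ⟨_, rfl⟩
    _ ≤ D.width := D.restrict_width_le S H hsub
    _ = screewidth G := hD
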